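/- arXiv:1307.1537 — 2 statements merged into one kernel-verified Lean document; each statement's English description precedes it below -/
import Mathlib

section
/- Fix β > 0 and γ > 0. Then the map ρ ↦ f(γ,β,ρ) is strictly increasing on the interval (0, β/γ) and strictly decreasing on the interval (β/γ, ∞). -/
/-- The deterministic equivalent `g(β,ρ)`: the unique positive solution of
`g·(ρ + β/(1+g)) = 1`, given in closed form. -/
noncomputable def gfun (β ρ : ℝ) : ℝ :=
  ((1 - ρ - β) + Real.sqrt ((ρ + β - 1) ^ 2 + 4 * ρ)) / (2 * ρ)

/-- The limiting SINR coefficient `f(γ,β,ρ)` at effective SNR γ. -/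
noncomputable def ffun (γ β ρ : ℝ) : ℝ :=
  gfun β ρ * (γ + (γ * ρ / β) * (1 + gfun β ρ) ^ 2) / (γ + (1 + gfun β ρ) ^ 2)

lemma gfun_pos {β ρ : ℝ} (hβ : 0 < β) (hρ : 0 < ρ) : 0 < gfun β ρ := by
  unfold gfun
  apply div_pos _ (by linarith)
  have hD : (ρ + β - 1)^2 < (ρ + β - 1)^2 + 4*ρ := by nlinarith
  have hs : |ρ + β - 1| < Real.sqrt ((ρ + β - 1)^2 + 4*ρ) := by
    rw [← Real.sqrt_sq_eq_abs]
    exact Real.sqrt_lt_sqrt (sq_nonneg _) hD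
  have h1 : ρ + β - 1 ≤ |ρ + β - 1| := le_abs_self _
  linarith

lemma gfun_eq {β ρ : ℝ} (hβ : 0 < β) (hρ : 0 < ρ) :
    ρ * (gfun β ρ)^2 + (ρ + β - 1) * gfun β ρ = 1 := by
  unfold gfun
  have hs2 : (Real.sqrt ((ρ + β - 1) ^ 2 + 4 * ρ))^2 = (ρ + β - 1) ^ 2 + 4 * ρ :=
    Real.sq_sqrt (by positivity)
  set s := Real.sqrt ((ρ + β - 1) ^ 2 + 4 * ρ)
  field_simp
  ring_nf
  nlinarith [hs2]

lemma gfun_anti {β ρ₁ ρ₂ : ℝ} (hβ : 0 < β) (hρ₁ : 0 < ρ₁) (h12 : ρ₁ < ρ₂) :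
    gfun β ρ₂ < gfun β ρ₁ := by
  have hρ₂ : 0 < ρ₂ := lt_trans hρ₁ h12
  have h1 := gfun_eq hβ hρ₁
  have h2 := gfun_eq hβ hρ₂
  have g1 := gfun_pos hβ hρ₁
  have g2 := gfun_pos hβ hρ₂
  set a := gfun β ρ₁
  set b := gfun β ρ₂
  by_contra h
  push_neg at h
  have key : (1+a)*(1+b)*(ρ₂*b - ρ₁*a) + β*(b - a) = 0 := by
    linear_combination (1+a)*h2 - (1+b)*h1
  have hrb : ρ₁*a < ρ₂*b := by nlinarith
  have hp : 0 < (1+a)*(1+b)*(ρ₂*b - ρ₁*a) :=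
    mul_pos (mul_pos (by linarith) (by linarith)) (by linarith)
  nlinarith [mul_nonneg hβ.le (sub_nonneg.2 h)]

lemma ffun_eq {γ β ρ : ℝ} (hγ : 0 < γ) (hβ : 0 < β) (hρ : 0 < ρ) :
    ffun γ β ρ = γ * ((1 + gfun β ρ)^2 - β * (gfun β ρ)^2) / (β * (γ + (1 + gfun β ρ)^2)) := by
  have he := gfun_eq hβ hρ
  have hg := gfun_pos hβ hρ
  set g := gfun β ρ with hgdef
  have hβ' : (β:ℝ) ≠ 0 := hβ.ne'
  have hnum : g * (γ + (γ * ρ / β) * (1+g)^2) = γ*((1+g)^2 - β*g^2)/β := by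
    rw [eq_div_iff hβ']
    field_simp
    linear_combination (1+g) * he
  unfold ffun
  rw [← hgdef, hnum, div_div]

lemma key_lemma {γ β g0 a b : ℝ} (hγ : 0 < γ) (hβ : 0 < β) (hg0 : 0 < g0)
    (ha : 0 < a) (hb : 0 < b) (hab : b < a)
    (hN : β*g0^2 + (β + β*γ - γ)*g0 = γ) :
    (g0 < b → γ*((1+a)^2 - β*a^2)/(β*(γ+(1+a)^2)) < γ*((1+b)^2 - β*b^2)/(β*(γ+(1+b)^2))) ∧
    (a < g0 → γ*((1+b)^2 - β*b^2)/(β*(γ+(1+b)^2)) < γ*((1+a)^2 - β*a^2)/(β*(γ+(1+a)^2))) := by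
  set M : ℝ := 2*γ + (γ - γ*β - β)*(a+b) - 2*β*a*b with hM
  have hMg0 : M * g0 = (g0-a)*(γ+β*b*g0) + (g0-b)*(γ+β*a*g0) := by
    linear_combination (-(a+b))*hN
  have hda : (0:ℝ) < β*(γ+(1+a)^2) := by positivity
  have hdb : (0:ℝ) < β*(γ+(1+b)^2) := by positivity
  have hdiff : γ*((1+a)^2 - β*a^2)*(β*(γ+(1+b)^2)) - γ*((1+b)^2 - β*b^2)*(β*(γ+(1+a)^2))
      = γ*β*(a-b)*M := by rw [hM]; ring
  constructor
  · intro h0b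
    have h0a : g0 < a := lt_trans h0b hab
    have hMneg : M < 0 := by
      have h1 : (g0-a)*(γ+β*b*g0) < 0 :=
        mul_neg_of_neg_of_pos (by linarith) (by positivity)
      have h2 : (g0-b)*(γ+β*a*g0) < 0 :=
        mul_neg_of_neg_of_pos (by linarith) (by positivity)
      nlinarith
    rw [div_lt_div_iff₀ hda hdb]
    nlinarith [mul_pos (mul_pos hγ hβ) (sub_pos.2 hab)]
  · intro hag0
    have hbg0 : b < g0 := lt_trans hab hag0
    have hMpos : 0 < M := by
      have h1 : 0 < (g0-a)*(γ+β*b*g0) :=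
        mul_pos (by linarith) (by positivity)
      have h2 : 0 < (g0-b)*(γ+β*a*g0) :=
        mul_pos (by linarith) (by positivity)
      nlinarith
    rw [div_lt_div_iff₀ hdb hda]
    nlinarith [mul_pos (mul_pos hγ hβ) (sub_pos.2 hab)]

/-- Fix β > 0 and γ > 0. Then ρ ↦ f(γ,β,ρ) is strictly
increasing on (0, β/γ) and strictly decreasing on (β/γ, ∞). -/
theorem ffun_strictMono_strictAnti (β γ : ℝ) (hβ : 0 < β) (hγ : 0 < γ) :
    StrictMonoOn (fun ρ => ffun γ β ρ) (Set.Ioo 0 (β / γ)) ∧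
    StrictAntiOn (fun ρ => ffun γ β ρ) (Set.Ioi (β / γ)) := by
  have hbg : 0 < β / γ := div_pos hβ hγ
  set g0 := gfun β (β/γ) with hg0def
  have hg0 : 0 < g0 := gfun_pos hβ hbg
  have hN : β*g0^2 + (β + β*γ - γ)*g0 = γ := by
    have h := gfun_eq hβ hbg
    rw [← hg0def] at h
    have hγ' : (γ:ℝ) ≠ 0 := hγ.ne'
    field_simp at h
    linarith
  constructor
  · intro ρ₁ h₁ ρ₂ h₂ h12
    have hρ₁ : 0 < ρ₁ := h₁.1
    have hρ₂ : 0 < ρ₂ := h₂.1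
    have ha := gfun_pos hβ hρ₁
    have hb := gfun_pos hβ hρ₂
    have hab : gfun β ρ₂ < gfun β ρ₁ := gfun_anti hβ hρ₁ h12
    have h0b : g0 < gfun β ρ₂ := gfun_anti hβ hρ₂ h₂.2
    simp only
    rw [ffun_eq hγ hβ hρ₁, ffun_eq hγ hβ hρ₂]
    exact (key_lemma hγ hβ hg0 ha hb hab hN).1 h0b
  · intro ρ₁ h₁ ρ₂ h₂ h12
    have hρ₁ : 0 < ρ₁ := lt_trans hbg h₁
    have hρ₂ : 0 < ρ₂ := lt_trans hρ₁ h12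
    have ha := gfun_pos hβ hρ₁
    have hb := gfun_pos hβ hρ₂
    have hab : gfun β ρ₂ < gfun β ρ₁ := gfun_anti hβ hρ₁ h12
    have hag0 : gfun β ρ₁ < g0 := gfun_anti hβ hbg h₁
    simp only
    rw [ffun_eq hγ hβ hρ₁, ffun_eq hγ hβ hρ₂]
    exact (key_lemma hγ hβ hg0 ha hb hab hN).2 hag0
end

section
/- Let L ≥ 1, β > 0, and let γ_1 ≥ γ_2 ≥ … ≥ γ_L > 0. Let β_j ≥ 0 and p_j ≥ 0 for j = 1,…,L, with β_j · p_j > 0 for at least one j. Define R(ρ) := Σ_{j=1}^L β_j · log(1 + p_j · f(γ_j,β,ρ)) for ρ > 0. If ρ* > 0 is a critical point of R (i.e., R is differentiable at ρ* with derivative zero), then Σ_{j=1}^L (β_j · p_j · f(γ_j,β,ρ*)² / (1 + p_j · f(γ_j,β,ρ*))) · (ρ*/β − 1/γ_j) = 0. -/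
set_option maxRecDepth 100000
set_option maxHeartbeats 1600000


lemma arg_pos {β ρ : ℝ} (hρ : 0 < ρ) : 0 < (ρ + β - 1) ^ 2 + 4 * ρ := by positivity

lemma g_pos {β ρ : ℝ} (hρ : 0 < ρ) : 0 < gfun β ρ := by
  have h := arg_pos (β := β) hρ
  have hs := Real.sq_sqrt h.le
  have hs0 : 0 ≤ Real.sqrt ((ρ + β - 1) ^ 2 + 4 * ρ) := Real.sqrt_nonneg _
  have hlt : ρ + β - 1 < Real.sqrt ((ρ + β - 1) ^ 2 + 4 * ρ) := by nlinarith
  unfold gfun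
  apply div_pos (by linarith) (by linarith)

lemma g_rel {β ρ : ℝ} (hρ : 0 < ρ) :
    ρ * gfun β ρ ^ 2 + (ρ + β - 1) * gfun β ρ = 1 := by
  have h := arg_pos (β := β) hρ
  unfold gfun
  set s := Real.sqrt ((ρ + β - 1) ^ 2 + 4 * ρ) with hsdef
  have hs : s ^ 2 = (ρ + β - 1) ^ 2 + 4 * ρ := Real.sq_sqrt h.le
  field_simp
  linear_combination hs

lemma g_sqrt_val {β ρ : ℝ} (hρ : 0 < ρ) :
    Real.sqrt ((ρ + β - 1) ^ 2 + 4 * ρ) = 2 * ρ * gfun β ρ + (ρ + β - 1) := by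
  unfold gfun; field_simp; ring

lemma one_add_sq_pos {β ρ : ℝ} (hρ : 0 < ρ) : 0 < 1 + ρ * gfun β ρ ^ 2 := by
  have := g_pos (β := β) hρ; positivity

lemma hasDerivAt_gfun {β ρ : ℝ} (hρ : 0 < ρ) :
    HasDerivAt (gfun β)
      (-(gfun β ρ) ^ 2 * (1 + gfun β ρ) / (1 + ρ * gfun β ρ ^ 2)) ρ := by
  have h := arg_pos (β := β) hρ
  have h1 : HasDerivAt (fun r : ℝ => r + β - 1) 1 ρ := by
    simpa [add_sub_assoc] using (hasDerivAt_id ρ).add_const (β - 1)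
  have hq : HasDerivAt (fun r : ℝ => (r + β - 1) ^ 2 + 4 * r)
      (2 * (ρ + β - 1) + 4) ρ := by
    have h2 := (h1.fun_pow 2).add ((hasDerivAt_id ρ).const_mul 4)
    refine h2.congr_deriv (Eq.symm ?_); ring
  have hsq := hq.sqrt (ne_of_gt h)
  have hnum : HasDerivAt (fun r : ℝ => (1 - r - β) + Real.sqrt ((r + β - 1) ^ 2 + 4 * r))
      (-1 + (2 * (ρ + β - 1) + 4) / (2 * Real.sqrt ((ρ + β - 1) ^ 2 + 4 * ρ))) ρ := by
    have h3 : HasDerivAt (fun r : ℝ => 1 - r - β) (-1) ρ := by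
      have := ((hasDerivAt_id ρ).const_sub 1).sub_const β
      simpa using this
    exact h3.add hsq
  have hden : HasDerivAt (fun r : ℝ => 2 * r) 2 ρ := by
    simpa using (hasDerivAt_id ρ).const_mul 2
  have hdiv := hnum.fun_div hden (by positivity)
  have heq : (fun r : ℝ => ((1 - r - β) + Real.sqrt ((r + β - 1) ^ 2 + 4 * r)) / (2 * r))
      = gfun β := rfl
  rw [heq] at hdiv
  refine hdiv.congr_deriv (Eq.symm ?_)
  rw [g_sqrt_val hρ]
  have hrel := g_rel (β := β) hρ
  have hgpos := g_pos (β := β) hρ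
  set g := gfun β ρ with hg
  have h2 : (0:ℝ) < 1 + ρ * g ^ 2 := one_add_sq_pos hρ
  have hs0 : 2 * ρ * g + (ρ + β - 1) ≠ 0 := by
    intro hz; rw [← g_sqrt_val hρ] at hz
    exact (ne_of_gt (Real.sqrt_pos.mpr h)) hz
  field_simp
  have hs0' : g * ρ * 2 + (ρ + β - 1) ≠ 0 := by convert hs0 using 2; ring
  field_simp
  linear_combination (4 * ρ * (1 + g ^ 2 * ρ) - 4 * g * ρ ^ 2 * (1 + g)) * hrel

lemma f_pos {γ β ρ : ℝ} (hγ : 0 < γ) (hβ : 0 < β) (hρ : 0 < ρ) : 0 < ffun γ β ρ := by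
  have hg := g_pos (β := β) hρ
  unfold ffun; positivity

lemma hasDerivAt_ffun {γ β ρ : ℝ} (hγ : 0 < γ) (hβ : 0 < β) (hρ : 0 < ρ) :
    HasDerivAt (fun r => ffun γ β r)
      (-(2 * β ^ 2 * gfun β ρ ^ 3 / (1 + ρ * gfun β ρ ^ 2) ^ 3) * (ffun γ β ρ) ^ 2
        * (ρ / β - 1 / γ)) ρ := by
  have hg := hasDerivAt_gfun (β := β) hρ
  have hgpos := g_pos (β := β) hρ
  set G := -(gfun β ρ) ^ 2 * (1 + gfun β ρ) / (1 + ρ * gfun β ρ ^ 2) with hG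
  have hN : HasDerivAt (fun r => γ + (γ * r / β) * (1 + gfun β r) ^ 2)
      ((γ / β) * (1 + gfun β ρ) ^ 2 + (γ * ρ / β) * (2 * (1 + gfun β ρ) * G)) ρ := by
    have hc : HasDerivAt (fun r : ℝ => γ * r / β) (γ / β) ρ := by
      simpa using ((hasDerivAt_id ρ).const_mul γ).div_const β
    have hpow : HasDerivAt (fun r => (1 + gfun β r) ^ 2) (2 * (1 + gfun β ρ) * G) ρ := by
      have := ((hg.const_add 1).fun_pow 2)
      simpa [mul_comm, mul_assoc, mul_left_comm] using this
    have := (hc.fun_mul hpow).const_add γ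
    convert this using 1
    try ring
  have hE : HasDerivAt (fun r => γ + (1 + gfun β r) ^ 2) (2 * (1 + gfun β ρ) * G) ρ := by
    have := ((hg.const_add 1).fun_pow 2).const_add γ
    simpa [mul_comm, mul_assoc, mul_left_comm] using this
  have hE0 : γ + (1 + gfun β ρ) ^ 2 ≠ 0 := by positivity
  have hdiv := (hg.fun_mul hN).fun_div hE hE0
  have heq : (fun r => gfun β r * (γ + (γ * r / β) * (1 + gfun β r) ^ 2) /
      (γ + (1 + gfun β r) ^ 2)) = fun r => ffun γ β r := rfl
  rw [heq] at hdiv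
  refine hdiv.congr_deriv (Eq.symm ?_)
  rw [hG]
  unfold ffun
  have hrel := g_rel (β := β) hρ
  have h2 : (0:ℝ) < 1 + ρ * gfun β ρ ^ 2 := one_add_sq_pos hρ
  have hEpos : (0:ℝ) < γ + (1 + gfun β ρ) ^ 2 := by positivity
  set g := gfun β ρ with hgdef
  have hg0 : g ≠ 0 := ne_of_gt hgpos
  have hq0 : (1 : ℝ) + ρ * g ^ 2 ≠ 0 := ne_of_gt h2
  have hNval : γ + γ * ρ / β * (1 + g) ^ 2 = γ * (1 + g) * (1 + ρ * g ^ 2) / (g * β) := by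
    field_simp
    linear_combination hrel
  have hN'val : γ / β * (1 + g) ^ 2 + γ * ρ / β * (2 * (1 + g) * (-g ^ 2 * (1 + g) / (1 + ρ * g ^ 2)))
      = γ * (1 + g) ^ 2 * (1 - ρ * g ^ 2) / (β * (1 + ρ * g ^ 2)) := by
    field_simp
    ring
  rw [hNval, hN'val]
  have hnum : (-g ^ 2 * (1 + g) / (1 + ρ * g ^ 2) * (γ * (1 + g) * (1 + ρ * g ^ 2) / (g * β)) +
          g * (γ * (1 + g) ^ 2 * (1 - ρ * g ^ 2) / (β * (1 + ρ * g ^ 2)))) *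
        (γ + (1 + g) ^ 2) -
      g * (γ * (1 + g) * (1 + ρ * g ^ 2) / (g * β)) * (2 * (1 + g) * (-g ^ 2 * (1 + g) / (1 + ρ * g ^ 2)))
      = 2 * γ * (1 + g) ^ 2 * g ^ 3 * (β - ρ * γ) / (β * (1 + ρ * g ^ 2)) := by
    field_simp
    linear_combination (-2 * g) * hrel
  rw [hnum]
  field_simp
  ring

/-- With R(ρ) := Σ_j β_j·log(1 + p_j·f(γ_j,β,ρ)), if ρ* > 0
is a critical point of R (R differentiable at ρ* with derivative zero), then
Σ_j (β_j p_j f(γ_j,β,ρ*)²/(1+p_j f(γ_j,β,ρ*)))·(ρ*/β − 1/γ_j) = 0. -/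
theorem critical_point_condition (L : ℕ) (hL : 1 ≤ L) (β : ℝ) (hβ : 0 < β)
    (γ : Fin L → ℝ) (hγpos : ∀ j, 0 < γ j)
    (hγsorted : ∀ i j : Fin L, i ≤ j → γ j ≤ γ i)
    (βv p : Fin L → ℝ) (hβv : ∀ j, 0 ≤ βv j) (hp : ∀ j, 0 ≤ p j)
    (hex : ∃ j, 0 < βv j * p j)
    (ρstar : ℝ) (hρstar : 0 < ρstar)
    (hcrit : HasDerivAt
      (fun r => ∑ j, βv j * Real.log (1 + p j * ffun (γ j) β r)) 0 ρstar) :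
    ∑ j, (βv j * p j * (ffun (γ j) β ρstar) ^ 2 /
        (1 + p j * ffun (γ j) β ρstar)) * (ρstar / β - 1 / γ j) = 0 := by
  have hgpos := g_pos (β := β) hρstar
  have hqpos := one_add_sq_pos (β := β) hρstar
  have hKpos : 0 < 2 * β ^ 2 * gfun β ρstar ^ 3 / (1 + ρstar * gfun β ρstar ^ 2) ^ 3 := by
    positivity
  have hfpos : ∀ j, 0 < ffun (γ j) β ρstar := fun j => f_pos (hγpos j) hβ hρstar
  have hden : ∀ j, (0:ℝ) < 1 + p j * ffun (γ j) β ρstar := fun j => by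
    have := mul_nonneg (hp j) (hfpos j).le; linarith
  have hsum : HasDerivAt (fun r => ∑ j, βv j * Real.log (1 + p j * ffun (γ j) β r))
      (∑ j, βv j * (p j * (-(2 * β ^ 2 * gfun β ρstar ^ 3 /
          (1 + ρstar * gfun β ρstar ^ 2) ^ 3) * (ffun (γ j) β ρstar) ^ 2 *
          (ρstar / β - 1 / γ j)) / (1 + p j * ffun (γ j) β ρstar))) ρstar := by
    apply HasDerivAt.fun_sum
    intro j _
    have hf := hasDerivAt_ffun (hγpos j) hβ hρstar
    have hlog := (((hf.const_mul (p j)).const_add 1).log (ne_of_gt (hden j)))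
    exact hlog.const_mul (βv j)
  have h0 := hcrit.unique hsum
  have h2 : ∑ j, βv j * (p j * (-(2 * β ^ 2 * gfun β ρstar ^ 3 /
          (1 + ρstar * gfun β ρstar ^ 2) ^ 3) * (ffun (γ j) β ρstar) ^ 2 *
          (ρstar / β - 1 / γ j)) / (1 + p j * ffun (γ j) β ρstar))
      = -(2 * β ^ 2 * gfun β ρstar ^ 3 / (1 + ρstar * gfun β ρstar ^ 2) ^ 3) *
        ∑ j, (βv j * p j * (ffun (γ j) β ρstar) ^ 2 /
          (1 + p j * ffun (γ j) β ρstar)) * (ρstar / β - 1 / γ j) := by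
    rw [Finset.mul_sum]
    exact Finset.sum_congr rfl fun j _ => by ring
  rw [h2] at h0
  have h3 := mul_eq_zero.mp h0.symm
  rcases h3 with h3 | h3
  · exact absurd h3 (by simpa using ne_of_gt hKpos)
  · exact h3
end
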